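/- Let X ⊆ ℝ^d be a nonempty finite union of polyhedral sets and x, z ∈ ℝ^d. If z does not belong to the recession cone 0⁺X, then dist(x + λz, X) → +∞ as λ → +∞. -/
import Mathlib


open scoped RealInnerProductSpace

/-- A polyhedral set: a finite intersection of closed half-spaces. -/
def IsPolyhedral {d : ℕ} (Q : Set (EuclideanSpace ℝ (Fin d))) : Prop :=
  ∃ (n : ℕ) (v : Fin n → EuclideanSpace ℝ (Fin d)) (b : Fin n → ℝ),
    Q = {x | ∀ j, ⟪v j, x⟫ ≤ b j}

/-- A finite union of polyhedral sets. -/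
def IsFinUnionPolyhedral {d : ℕ} (X : Set (EuclideanSpace ℝ (Fin d))) : Prop :=
  ∃ (s : ℕ) (Q : Fin s → Set (EuclideanSpace ℝ (Fin d))),
    (∀ i, IsPolyhedral (Q i)) ∧ X = ⋃ i, Q i

/-- The recession cone of a set. -/
def recCone {d : ℕ} (X : Set (EuclideanSpace ℝ (Fin d))) : Set (EuclideanSpace ℝ (Fin d)) :=
  {z | ∃ x ∈ X, ∀ t : ℝ, 0 ≤ t → x + t • z ∈ X}

theorem stmt_12 {d : ℕ} (X : Set (EuclideanSpace ℝ (Fin d)))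
    (hX : IsFinUnionPolyhedral X) (hXne : X.Nonempty)
    (x z : EuclideanSpace ℝ (Fin d)) (hz : z ∉ recCone X) :
    Filter.Tendsto (fun t : ℝ => Metric.infDist (x + t • z) X) Filter.atTop Filter.atTop := by
  obtain ⟨s, Q, hQ, rfl⟩ := hX
  rw [Filter.tendsto_atTop]
  intro M
  have key : ∀ i : Fin s, ∀ᶠ t : ℝ in Filter.atTop, ∀ q ∈ Q i, M ≤ dist (x + t • z) q := by
    intro i
    rcases (Q i).eq_empty_or_nonempty with he | ⟨w, hw⟩
    · filter_upwards with t q hq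
      rw [he] at hq
      exact absurd hq (Set.notMem_empty q)
    · obtain ⟨n, v, b, hQi⟩ := hQ i
      have hj : ∃ j, 0 < ⟪v j, z⟫ := by
        by_contra h
        push_neg at h
        apply hz
        refine ⟨w, Set.mem_iUnion.2 ⟨i, hw⟩, fun t ht => Set.mem_iUnion.2 ⟨i, ?_⟩⟩
        rw [hQi] at hw ⊢
        intro j
        have hwj := hw j
        have heq : ⟪v j, w + t • z⟫ = ⟪v j, w⟫ + t * ⟪v j, z⟫ := by
          simp [inner_add_right, inner_smul_right]
        rw [heq]
        nlinarith [h j]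
      obtain ⟨j, hjpos⟩ := hj
      have hvne : v j ≠ 0 := by
        intro h0; rw [h0] at hjpos; simp at hjpos
      have hvnorm : 0 < ‖v j‖ := norm_pos_iff.2 hvne
      filter_upwards [Filter.eventually_ge_atTop
        ((M * ‖v j‖ - ⟪v j, x⟫ + b j) / ⟪v j, z⟫)] with t ht q hq
      rw [hQi] at hq
      have hqj : ⟪v j, q⟫ ≤ b j := hq j
      have h1 : ⟪v j, (x + t • z) - q⟫ ≤ ‖v j‖ * ‖(x + t • z) - q‖ :=
        real_inner_le_norm _ _
      have h2 : ⟪v j, (x + t • z) - q⟫ = ⟪v j, x⟫ + t * ⟪v j, z⟫ - ⟪v j, q⟫ := by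
        simp [inner_sub_right, inner_add_right, inner_smul_right]
      rw [dist_eq_norm]
      have ht' : M * ‖v j‖ - ⟪v j, x⟫ + b j ≤ t * ⟪v j, z⟫ := by
        rw [div_le_iff₀ hjpos] at ht; linarith
      nlinarith
  have hall := Filter.eventually_all.2 key
  filter_upwards [hall] with t ht
  by_contra hlt
  push_neg at hlt
  obtain ⟨q, hq, hdq⟩ := (Metric.infDist_lt_iff hXne).1 hlt
  rw [Set.mem_iUnion] at hq
  obtain ⟨i, hqi⟩ := hq
  exact absurd hdq (not_lt.2 (ht i q hqi))
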